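/- arXiv:2604.15300 — 3 statements merged into one kernel-verified Lean document; each statement's English description precedes it below -/
import Mathlib

section
/- Let n ≥ 2. Let μ be the uniform probability measure on (0, π/2)^{n-1}, i.e. the measure with constant density (2/π)^{n-1} with respect to Lebesgue measure on (0, π/2)^{n-1}. Let T : (0, π/2)^{n-1} → ℝ^{n-1} be the map with components T(φ)_k = cos²(φ_k)·∏_{j=1}^{k-1} sin²(φ_j). Then the pushforward measure T_*μ is absolutely continuous with respect to Lebesgue measure on ℝ^{n-1}, with density p(λ₁, …, λ_{n-1}) = π^{-(n-1)} · ∏_{k=1}^{n-1} 1/√(λ_k · (1 − ∑_{i=1}^{k} λ_i)) on the open region {λ ∈ ℝ^{n-1} : λ_i > 0 for all i and ∑_{i=1}^{n-1} λ_i < 1}, and density 0 outside this region. -/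
set_option maxRecDepth 10000

open MeasureTheory Real
open scoped ENNReal

/-- The map sending the spherical coordinates to the first `m` squared Cartesian
coordinates (the eigenvalues): `(TMap m φ) k = cos²(φ k) ∏_{j<k} sin²(φ j)`. -/
noncomputable def TMap (m : ℕ) (φ : Fin m → ℝ) : Fin m → ℝ := fun k =>
  Real.cos (φ k) ^ 2 * ∏ j ∈ Finset.univ.filter (fun j : Fin m => j < k), Real.sin (φ j) ^ 2

namespace Stmt5

variable {m : ℕ}

lemma filter_lt_eq (k : Fin m) :
    Finset.univ.filter (fun j : Fin m => j < k) = Finset.Iio k := by ext j; simp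

lemma TMap_eq_prod (φ : Fin m → ℝ) (k : Fin m) :
    TMap m φ k = ∏ j ∈ Finset.Iic k,
      (if j = k then Real.cos (φ j) ^ 2 else Real.sin (φ j) ^ 2) := by
  rw [← Finset.Iio_insert, Finset.prod_insert (by simp), if_pos rfl]
  unfold TMap
  rw [filter_lt_eq]
  congr 1
  exact (Finset.prod_congr rfl fun j hj => by
    rw [if_neg (ne_of_lt (Finset.mem_Iio.mp hj))]).symm

/-- The Jacobian matrix of `TMap`. -/
noncomputable def Tmat (m : ℕ) (φ : Fin m → ℝ) : Matrix (Fin m) (Fin m) ℝ := fun k j =>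
  if j ≤ k then
    (∏ i ∈ (Finset.Iic k).erase j,
        (if i = k then Real.cos (φ i) ^ 2 else Real.sin (φ i) ^ 2)) *
      (if j = k then -(2 * Real.sin (φ j) * Real.cos (φ j))
        else 2 * Real.sin (φ j) * Real.cos (φ j))
  else 0

lemma hasFDerivAt_TMap (φ : Fin m → ℝ) :
    HasFDerivAt (TMap m)
      (LinearMap.toContinuousLinearMap (Matrix.toLin' (Tmat m φ))) φ := by
  apply hasFDerivAt_pi''
  intro k
  have hfun : (fun ψ : Fin m → ℝ => TMap m ψ k)
      = (fun ψ => ∏ j ∈ Finset.Iic k,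
          (if j = k then Real.cos (ψ j) ^ 2 else Real.sin (ψ j) ^ 2)) :=
    funext fun ψ => TMap_eq_prod ψ k
  rw [hfun]
  have h1 : ∀ j ∈ Finset.Iic k,
      HasFDerivAt (fun ψ : Fin m → ℝ => (if j = k then Real.cos (ψ j) ^ 2 else Real.sin (ψ j) ^ 2))
        ((if j = k then -(2 * Real.sin (φ j) * Real.cos (φ j))
            else 2 * Real.sin (φ j) * Real.cos (φ j)) •
          (ContinuousLinearMap.proj j : (Fin m → ℝ) →L[ℝ] ℝ)) φ := by
    intro j _
    by_cases hj : j = k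
    · simp only [if_pos hj]
      have hc : HasDerivAt (fun x : ℝ => Real.cos x ^ 2)
          (-(2 * Real.sin (φ j) * Real.cos (φ j))) (φ j) := by
        have := ((Real.hasDerivAt_cos (φ j)).pow 2)
        refine this.congr_deriv ?_
        norm_num only
        ring
      exact hc.comp_hasFDerivAt φ (hasFDerivAt_apply (𝕜 := ℝ) j φ :)
    · simp only [if_neg hj]
      have hs : HasDerivAt (fun x : ℝ => Real.sin x ^ 2)
          (2 * Real.sin (φ j) * Real.cos (φ j)) (φ j) := by
        have := ((Real.hasDerivAt_sin (φ j)).pow 2)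
        refine this.congr_deriv ?_
        norm_num only
        ring
      exact hs.comp_hasFDerivAt φ (hasFDerivAt_apply (𝕜 := ℝ) j φ :)
  have h2 := HasFDerivAt.finset_prod h1
  refine h2.congr_fderiv ?_
  refine ContinuousLinearMap.ext fun v => ?_
  simp only [ContinuousLinearMap.coe_comp', Function.comp_apply,
    ContinuousLinearMap.coe_sum', Finset.sum_apply, ContinuousLinearMap.coe_smul',
    Pi.smul_apply, ContinuousLinearMap.proj_apply, smul_eq_mul,
    LinearMap.coe_toContinuousLinearMap', Matrix.toLin'_apply, Matrix.mulVec,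
    dotProduct]
  rw [show ∑ j : Fin m, Tmat m φ k j * v j
      = ∑ j ∈ Finset.Iic k, Tmat m φ k j * v j from
    (Finset.sum_subset (Finset.subset_univ _) fun j _ hj => by
      simp [Tmat, Finset.mem_Iic.not.mp hj]).symm]
  refine Finset.sum_congr rfl fun j hj => ?_
  simp only [Tmat, if_pos (Finset.mem_Iic.mp hj)]
  ring

lemma det_Tmat (φ : Fin m → ℝ) :
    (Tmat m φ).det = ∏ k : Fin m,
      (-(2 * Real.sin (φ k) * Real.cos (φ k)) * ∏ j ∈ Finset.Iio k, Real.sin (φ j) ^ 2) := by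
  rw [Matrix.det_of_lowerTriangular (Tmat m φ)
    (fun i j hij => by
      have : i < j := hij
      simp [Tmat, not_le.mpr this])]
  refine Finset.prod_congr rfl fun k _ => ?_
  simp only [Tmat, le_refl, if_pos, Finset.Iic_erase]
  rw [Finset.prod_congr rfl (fun i hi => if_neg (ne_of_lt (Finset.mem_Iio.mp hi)))]
  ring

lemma sum_TMap (φ : Fin m → ℝ) : ∀ K : ℕ, K ≤ m →
    ∑ i ∈ Finset.univ.filter (fun i : Fin m => i.val < K), TMap m φ i
      = 1 - ∏ j ∈ Finset.univ.filter (fun j : Fin m => j.val < K), Real.sin (φ j) ^ 2 := by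
  intro K
  induction K with
  | zero => simp
  | succ K ih =>
    intro hK
    have hKm : K < m := hK
    set k : Fin m := ⟨K, hKm⟩ with hk
    have hins : Finset.univ.filter (fun i : Fin m => i.val < K + 1)
        = insert k (Finset.univ.filter (fun i : Fin m => i.val < K)) := by
      ext i; simp [Fin.ext_iff, hk]; omega
    have hknot : k ∉ Finset.univ.filter (fun i : Fin m => i.val < K) := by simp [hk]
    have hflt : Finset.univ.filter (fun j : Fin m => j < k)
        = Finset.univ.filter (fun j : Fin m => j.val < K) := by
      ext j; simp only [Finset.mem_filter, Finset.mem_univ, true_and, Fin.lt_def]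
      exact Iff.rfl
    rw [hins, Finset.sum_insert hknot, Finset.prod_insert hknot, ih (le_of_lt hKm)]
    show TMap m φ k + _ = _
    unfold TMap
    rw [hflt]
    have hsc := Real.sin_sq_add_cos_sq (φ k)
    set P := ∏ j ∈ Finset.univ.filter (fun j : Fin m => j.val < K), Real.sin (φ j) ^ 2
    linear_combination P * hsc

lemma one_sub_sum_TMap (φ : Fin m → ℝ) (k : Fin m) :
    1 - ∑ i ∈ Finset.univ.filter (fun i : Fin m => i ≤ k), TMap m φ i
      = Real.sin (φ k) ^ 2 *
        ∏ j ∈ Finset.univ.filter (fun j : Fin m => j < k), Real.sin (φ j) ^ 2 := by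
  have h1 : Finset.univ.filter (fun i : Fin m => i ≤ k)
      = Finset.univ.filter (fun i : Fin m => i.val < k.val + 1) := by
    ext i; simp only [Finset.mem_filter, Finset.mem_univ, true_and, Fin.le_def]; omega
  have h2 : Finset.univ.filter (fun i : Fin m => i.val < k.val + 1)
      = insert k (Finset.univ.filter (fun i : Fin m => i < k)) := by
    ext i
    simp only [Finset.mem_filter, Finset.mem_univ, true_and, Finset.mem_insert,
      Fin.lt_def, Fin.ext_iff]
    omega
  have hkn : k ∉ Finset.univ.filter (fun i : Fin m => i < k) := by
    simp only [Finset.mem_filter, Finset.mem_univ, true_and]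
    exact lt_irrefl k
  rw [h1, sum_TMap φ (k.val + 1) k.isLt, sub_sub_cancel, h2, Finset.prod_insert hkn]

lemma sum_TMap_univ (φ : Fin m → ℝ) :
    ∑ i, TMap m φ i = 1 - ∏ j, Real.sin (φ j) ^ 2 := by
  have h := sum_TMap φ m le_rfl
  have he : Finset.univ.filter (fun i : Fin m => i.val < m) = Finset.univ :=
    Finset.filter_true_of_mem fun i _ => i.isLt
  rwa [he] at h

def U (m : ℕ) : Set (Fin m → ℝ) := Set.univ.pi fun _ : Fin m => Set.Ioo 0 (Real.pi / 2)

lemma mem_U {φ : Fin m → ℝ} (hφ : φ ∈ U m) (j : Fin m) : 0 < φ j ∧ φ j < Real.pi / 2 :=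
  hφ j (Set.mem_univ j)

lemma sin_pos_of_U {φ : Fin m → ℝ} (hφ : φ ∈ U m) (j : Fin m) : 0 < Real.sin (φ j) :=
  Real.sin_pos_of_pos_of_lt_pi (mem_U hφ j).1
    (lt_trans (mem_U hφ j).2 (by linarith [Real.pi_pos]))

lemma cos_pos_of_U {φ : Fin m → ℝ} (hφ : φ ∈ U m) (j : Fin m) : 0 < Real.cos (φ j) :=
  Real.cos_pos_of_mem_Ioo ⟨by linarith [Real.pi_pos, (mem_U hφ j).1], (mem_U hφ j).2⟩

lemma injOn_TMap : Set.InjOn (TMap m) (U m) := by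
  intro φ hφ ψ hψ h
  have key : ∀ K : ℕ, K ≤ m → ∀ k : Fin m, k.val < K → φ k = ψ k := by
    intro K
    induction K with
    | zero => intro _ k hk; omega
    | succ K ih =>
      intro hK k hk
      rcases Nat.lt_succ_iff_lt_or_eq.mp hk with h' | h'
      · exact ih (by omega) k h'
      · have hP : ∏ j ∈ Finset.univ.filter (fun j : Fin m => j < k), Real.sin (φ j) ^ 2
            = ∏ j ∈ Finset.univ.filter (fun j : Fin m => j < k), Real.sin (ψ j) ^ 2 := by
          refine Finset.prod_congr rfl fun j hj => ?_
          have hjk : j < k := (Finset.mem_filter.mp hj).2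
          rw [ih (by omega) j (by omega)]
        have hPpos : 0 < ∏ j ∈ Finset.univ.filter (fun j : Fin m => j < k),
            Real.sin (ψ j) ^ 2 :=
          Finset.prod_pos fun j _ => pow_pos (sin_pos_of_U hψ j) 2
        have hTk := congrFun h k
        unfold TMap at hTk
        rw [hP] at hTk
        have hcos2 : Real.cos (φ k) ^ 2 = Real.cos (ψ k) ^ 2 :=
          mul_right_cancel₀ (ne_of_gt hPpos) hTk
        have hcφ := cos_pos_of_U hφ k
        have hcψ := cos_pos_of_U hψ k
        have hcos : Real.cos (φ k) = Real.cos (ψ k) := by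
          have hfac : (Real.cos (φ k) - Real.cos (ψ k)) *
              (Real.cos (φ k) + Real.cos (ψ k)) = 0 := by ring_nf; linarith [hcos2]
          rcases mul_eq_zero.mp hfac with h0 | h0
          · linarith
          · linarith
        have hmemφ : φ k ∈ Set.Icc 0 Real.pi :=
          ⟨le_of_lt (mem_U hφ k).1, by linarith [(mem_U hφ k).2, Real.pi_pos]⟩
        have hmemψ : ψ k ∈ Set.Icc 0 Real.pi :=
          ⟨le_of_lt (mem_U hψ k).1, by linarith [(mem_U hψ k).2, Real.pi_pos]⟩
        exact Real.injOn_cos hmemφ hmemψ hcos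
  funext k
  exact key m le_rfl k k.isLt

lemma image_TMap :
    TMap m '' U m = {lam : Fin m → ℝ | (∀ i, 0 < lam i) ∧ ∑ i, lam i < 1} := by
  apply Set.Subset.antisymm
  · rintro _ ⟨φ, hφ, rfl⟩
    refine ⟨fun i => mul_pos (pow_pos (cos_pos_of_U hφ i) 2)
      (Finset.prod_pos fun j _ => pow_pos (sin_pos_of_U hφ j) 2), ?_⟩
    rw [sum_TMap_univ]
    have h : 0 < ∏ j, Real.sin (φ j) ^ 2 :=
      Finset.prod_pos fun j _ => pow_pos (sin_pos_of_U hφ j) 2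
    linarith
  · rintro lam ⟨hpos, hsum⟩
    set R : ℕ → ℝ :=
      fun K => 1 - ∑ i ∈ Finset.univ.filter (fun i : Fin m => i.val < K), lam i with hR
    have hRpos : ∀ K, 0 < R K := by
      intro K
      have hle : ∑ i ∈ Finset.univ.filter (fun i : Fin m => i.val < K), lam i
          ≤ ∑ i, lam i :=
        Finset.sum_le_sum_of_subset_of_nonneg (Finset.subset_univ _)
          (fun i _ _ => (hpos i).le)
      simp only [hR]
      linarith
    have hstep : ∀ k : Fin m, R (k.val + 1) = R k.val - lam k := by
      intro k
      have hins : Finset.univ.filter (fun i : Fin m => i.val < k.val + 1)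
          = insert k (Finset.univ.filter (fun i : Fin m => i.val < k.val)) := by
        ext i
        simp only [Finset.mem_filter, Finset.mem_univ, true_and, Finset.mem_insert,
          Fin.ext_iff]
        omega
      have hknot : k ∉ Finset.univ.filter (fun i : Fin m => i.val < k.val) := by simp
      simp only [hR, hins, Finset.sum_insert hknot]
      ring
    set φ : Fin m → ℝ := fun k => Real.arccos (Real.sqrt (lam k / R k.val)) with hφdef
    have hfrac : ∀ k : Fin m, 0 < lam k / R k.val ∧ lam k / R k.val < 1 := by
      intro k
      refine ⟨div_pos (hpos k) (hRpos _), ?_⟩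
      rw [div_lt_one (hRpos _)]
      have h := hRpos (k.val + 1)
      rw [hstep k] at h
      linarith
    have hcos2 : ∀ k, Real.cos (φ k) ^ 2 = lam k / R k.val := by
      intro k
      have h1 : Real.sqrt (lam k / R k.val) ≤ 1 := by
        have h := Real.sqrt_le_sqrt (le_of_lt (hfrac k).2)
        rwa [Real.sqrt_one] at h
      simp only [hφdef]
      rw [Real.cos_arccos (le_trans (by norm_num) (Real.sqrt_nonneg _)) h1,
        Real.sq_sqrt (le_of_lt (hfrac k).1)]
    have hsin2 : ∀ k : Fin m, Real.sin (φ k) ^ 2 = R (k.val + 1) / R k.val := by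
      intro k
      have h := Real.sin_sq_add_cos_sq (φ k)
      rw [hcos2 k] at h
      have hne : R k.val ≠ 0 := ne_of_gt (hRpos _)
      have h2 : Real.sin (φ k) ^ 2 = 1 - lam k / R k.val := by linarith
      rw [hstep k, h2]
      field_simp
    have hmemU : φ ∈ U m := by
      intro k _
      constructor
      · apply Real.arccos_pos.mpr
        have h := Real.sqrt_lt_sqrt (le_of_lt (hfrac k).1) (hfrac k).2
        rwa [Real.sqrt_one] at h
      · exact Real.arccos_lt_pi_div_two.mpr (Real.sqrt_pos.mpr (hfrac k).1)
    have hprod : ∀ K : ℕ, K ≤ m →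
        ∏ j ∈ Finset.univ.filter (fun j : Fin m => j.val < K), Real.sin (φ j) ^ 2 = R K := by
      intro K
      induction K with
      | zero => simp [hR]
      | succ K ih =>
        intro hK
        have hKm : K < m := hK
        set k : Fin m := ⟨K, hKm⟩ with hk
        have hins : Finset.univ.filter (fun i : Fin m => i.val < K + 1)
            = insert k (Finset.univ.filter (fun i : Fin m => i.val < K)) := by
          ext i
          simp only [Finset.mem_filter, Finset.mem_univ, true_and, Finset.mem_insert,
            Fin.ext_iff, hk]
          omega
        have hknot : k ∉ Finset.univ.filter (fun i : Fin m => i.val < K) := by simp [hk]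
        rw [hins, Finset.prod_insert hknot, ih (le_of_lt hKm), hsin2 k]
        simp only [hk]
        exact div_mul_cancel₀ _ (ne_of_gt (hRpos K))
    refine ⟨φ, hmemU, funext fun k => ?_⟩
    unfold TMap
    have hflt : Finset.univ.filter (fun j : Fin m => j < k)
        = Finset.univ.filter (fun j : Fin m => j.val < k.val) := by
      ext j; simp only [Finset.mem_filter, Finset.mem_univ, true_and, Fin.lt_def]
    rw [hflt, hprod k.val (le_of_lt k.isLt), hcos2 k]
    exact div_mul_cancel₀ _ (ne_of_gt (hRpos k.val))


lemma measurable_TMap : Measurable (TMap m) := by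
  apply measurable_pi_lambda
  intro k
  apply Measurable.mul
  · exact ((Real.continuous_cos.comp (continuous_apply k)).pow 2).measurable
  · exact (continuous_finset_prod _ fun j _ =>
      (Real.continuous_sin.comp (continuous_apply j)).pow 2).measurable

lemma continuous_det_Tmat : Continuous fun φ : Fin m → ℝ => (Tmat m φ).det := by
  have h : (fun φ : Fin m → ℝ => (Tmat m φ).det)
      = fun φ => ∏ k : Fin m,
        (-(2 * Real.sin (φ k) * Real.cos (φ k)) *
          ∏ j ∈ Finset.Iio k, Real.sin (φ j) ^ 2) := funext det_Tmat
  rw [h]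
  apply continuous_finset_prod
  intro k _
  apply Continuous.mul
  · exact ((continuous_const.mul (Real.continuous_sin.comp (continuous_apply k))).mul
      (Real.continuous_cos.comp (continuous_apply k))).neg
  · exact continuous_finset_prod _ fun j _ =>
      (Real.continuous_sin.comp (continuous_apply j)).pow 2

lemma measurable_inner_density :
    Measurable (fun lam : Fin m → ℝ =>
      ENNReal.ofReal ((Real.pi ^ m)⁻¹ *
        ∏ k : Fin m, 1 / Real.sqrt (lam k *
          (1 - ∑ i ∈ Finset.univ.filter (fun i : Fin m => i ≤ k), lam i)))) := by
  apply ENNReal.measurable_ofReal.comp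
  apply Measurable.mul measurable_const
  apply Finset.measurable_prod
  intro k _
  apply Measurable.div measurable_const
  apply Real.continuous_sqrt.measurable.comp
  apply Measurable.mul (measurable_pi_apply k)
  apply Measurable.sub measurable_const
  exact Finset.measurable_sum _ fun i _ => measurable_pi_apply i

lemma map_withDensity_comm {α β : Type*} [MeasurableSpace α] [MeasurableSpace β]
    (μ : Measure α) {f : α → β} (hf : Measurable f) {g : β → ℝ≥0∞} (hg : Measurable g) :
    (Measure.map f μ).withDensity g = Measure.map f (μ.withDensity fun a => g (f a)) := by
  refine Measure.ext fun A hA => ?_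
  rw [withDensity_apply _ hA, Measure.map_apply hf hA,
    withDensity_apply _ (hf hA), setLIntegral_map hA hg hf]

lemma pointwise {φ : Fin m → ℝ} (hφ : φ ∈ U m) :
    ENNReal.ofReal |(Tmat m φ).det| *
      ENNReal.ofReal ((Real.pi ^ m)⁻¹ *
        ∏ k : Fin m, 1 / Real.sqrt (TMap m φ k *
          (1 - ∑ i ∈ Finset.univ.filter (fun i : Fin m => i ≤ k), TMap m φ i)))
      = ENNReal.ofReal ((2 / Real.pi) ^ m) := by
  have hs := sin_pos_of_U hφ
  have hc := cos_pos_of_U hφ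
  have hQpos : ∀ k : Fin m,
      0 < ∏ j ∈ Finset.univ.filter (fun j : Fin m => j < k), Real.sin (φ j) ^ 2 :=
    fun k => Finset.prod_pos fun j _ => pow_pos (hs j) 2
  have hsqrt : ∀ k : Fin m,
      Real.sqrt (TMap m φ k *
        (1 - ∑ i ∈ Finset.univ.filter (fun i : Fin m => i ≤ k), TMap m φ i))
      = Real.sin (φ k) * Real.cos (φ k) *
          ∏ j ∈ Finset.univ.filter (fun j : Fin m => j < k), Real.sin (φ j) ^ 2 := by
    intro k
    have he : TMap m φ k * (Real.sin (φ k) ^ 2 *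
          ∏ j ∈ Finset.univ.filter (fun j : Fin m => j < k), Real.sin (φ j) ^ 2)
        = (Real.sin (φ k) * Real.cos (φ k) *
            ∏ j ∈ Finset.univ.filter (fun j : Fin m => j < k), Real.sin (φ j) ^ 2) ^ 2 := by
      unfold TMap
      ring
    rw [one_sub_sum_TMap, he, Real.sqrt_sq
      (le_of_lt (mul_pos (mul_pos (hs k) (hc k)) (hQpos k)))]
  have habs : |(Tmat m φ).det|
      = ∏ k : Fin m, (2 * (Real.sin (φ k) * Real.cos (φ k) *
          ∏ j ∈ Finset.univ.filter (fun j : Fin m => j < k), Real.sin (φ j) ^ 2)) := by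
    rw [det_Tmat, Finset.abs_prod]
    refine Finset.prod_congr rfl fun k _ => ?_
    rw [← filter_lt_eq k]
    rw [abs_of_neg (by nlinarith [mul_pos (mul_pos (mul_pos (two_pos (α := ℝ)) (hs k)) (hc k)) (hQpos k)])]
    ring
  rw [habs, ← ENNReal.ofReal_mul (le_of_lt (Finset.prod_pos fun k _ =>
    mul_pos two_pos (mul_pos (mul_pos (hs k) (hc k)) (hQpos k))))]
  congr 1
  have hP1 : ∏ k : Fin m, (1 : ℝ) / Real.sqrt (TMap m φ k *
        (1 - ∑ i ∈ Finset.univ.filter (fun i : Fin m => i ≤ k), TMap m φ i))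
      = ∏ k : Fin m, 1 / (Real.sin (φ k) * Real.cos (φ k) *
          ∏ j ∈ Finset.univ.filter (fun j : Fin m => j < k), Real.sin (φ j) ^ 2) :=
    Finset.prod_congr rfl fun k _ => by rw [hsqrt k]
  have h2 : ∏ k : Fin m, (2 * (Real.sin (φ k) * Real.cos (φ k) *
        ∏ j ∈ Finset.univ.filter (fun j : Fin m => j < k), Real.sin (φ j) ^ 2))
      = 2 ^ m * ∏ k : Fin m, (Real.sin (φ k) * Real.cos (φ k) *
        ∏ j ∈ Finset.univ.filter (fun j : Fin m => j < k), Real.sin (φ j) ^ 2) := by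
    rw [Finset.prod_mul_distrib, Finset.prod_const, Finset.card_univ, Fintype.card_fin]
  have h3 : ∏ k : Fin m, (1 : ℝ) / (Real.sin (φ k) * Real.cos (φ k) *
        ∏ j ∈ Finset.univ.filter (fun j : Fin m => j < k), Real.sin (φ j) ^ 2)
      = (∏ k : Fin m, (Real.sin (φ k) * Real.cos (φ k) *
        ∏ j ∈ Finset.univ.filter (fun j : Fin m => j < k), Real.sin (φ j) ^ 2))⁻¹ := by
    simp only [one_div, Finset.prod_inv_distrib]
  have hApos : 0 < ∏ k : Fin m, (Real.sin (φ k) * Real.cos (φ k) *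
      ∏ j ∈ Finset.univ.filter (fun j : Fin m => j < k), Real.sin (φ j) ^ 2) :=
    Finset.prod_pos fun k _ => mul_pos (mul_pos (hs k) (hc k)) (hQpos k)
  rw [hP1, h2, h3, div_pow]
  have hπ : (0:ℝ) < Real.pi ^ m := pow_pos Real.pi_pos m
  field_simp

lemma key (m : ℕ) :
    Measure.map (TMap m)
        (ENNReal.ofReal ((2 / Real.pi) ^ m) •
          volume.restrict (Set.univ.pi fun _ : Fin m => Set.Ioo 0 (Real.pi / 2))) =
      volume.withDensity (fun lam : Fin m → ℝ =>
        if (∀ i, 0 < lam i) ∧ ∑ i, lam i < 1 then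
          ENNReal.ofReal ((Real.pi ^ m)⁻¹ *
            ∏ k : Fin m,
              1 / Real.sqrt (lam k *
                (1 - ∑ i ∈ Finset.univ.filter (fun i : Fin m => i ≤ k), lam i)))
        else 0) := by
  have hU : MeasurableSet (U m) := MeasurableSet.univ_pi fun _ => measurableSet_Ioo
  have hT : Measurable (TMap m) := measurable_TMap
  set f : (Fin m → ℝ) → ℝ≥0∞ := fun lam =>
    ENNReal.ofReal ((Real.pi ^ m)⁻¹ *
      ∏ k : Fin m, 1 / Real.sqrt (lam k *
        (1 - ∑ i ∈ Finset.univ.filter (fun i : Fin m => i ≤ k), lam i))) with hfdef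
  have hfm : Measurable f := measurable_inner_density
  set Ω : Set (Fin m → ℝ) := {lam | (∀ i, 0 < lam i) ∧ ∑ i, lam i < 1} with hΩdef
  have hΩ : MeasurableSet Ω := by
    have h1 : Ω = (⋂ i, {lam : Fin m → ℝ | 0 < lam i}) ∩ {lam | ∑ i, lam i < 1} := by
      ext lam
      simp [hΩdef, Set.mem_iInter]
    rw [h1]
    exact (MeasurableSet.iInter fun i =>
      measurableSet_lt measurable_const (measurable_pi_apply i)).inter
      (measurableSet_lt (Finset.measurable_sum _ fun i _ => measurable_pi_apply i)
        measurable_const)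
  have hdens : (fun lam : Fin m → ℝ =>
      if (∀ i, 0 < lam i) ∧ ∑ i, lam i < 1 then
        ENNReal.ofReal ((Real.pi ^ m)⁻¹ *
          ∏ k : Fin m,
            1 / Real.sqrt (lam k *
              (1 - ∑ i ∈ Finset.univ.filter (fun i : Fin m => i ≤ k), lam i)))
      else 0) = Ω.indicator f := by
    funext lam
    by_cases h : (∀ i, 0 < lam i) ∧ ∑ i, lam i < 1
    · rw [if_pos h, Set.indicator_of_mem (show lam ∈ Ω from h)]
    · rw [if_neg h, Set.indicator_of_notMem (show lam ∉ Ω from h)]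
  have hD : Measurable (fun φ : Fin m → ℝ => ENNReal.ofReal
      |(LinearMap.toContinuousLinearMap (Matrix.toLin' (Tmat m φ))).det|) := by
    have hdet : (fun φ : Fin m → ℝ =>
        (LinearMap.toContinuousLinearMap (Matrix.toLin' (Tmat m φ))).det)
        = fun φ => (Tmat m φ).det := by
      funext φ
      simp [ContinuousLinearMap.det, LinearMap.coe_toContinuousLinearMap, LinearMap.det_toLin']
    exact ENNReal.measurable_ofReal.comp ((hdet ▸ continuous_det_Tmat.measurable).abs)
  have big := map_withDensity_abs_det_fderiv_eq_addHaar volume hU.nullMeasurableSet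
    (fun φ _ => (hasFDerivAt_TMap φ).hasFDerivWithinAt) injOn_TMap
  rw [hdens]
  symm
  calc volume.withDensity (Ω.indicator f)
      = (volume.restrict Ω).withDensity f := withDensity_indicator hΩ f
    _ = (volume.restrict (TMap m '' U m)).withDensity f := by rw [image_TMap]
    _ = (Measure.map (TMap m) ((volume.restrict (U m)).withDensity fun φ =>
          ENNReal.ofReal
            |(LinearMap.toContinuousLinearMap (Matrix.toLin' (Tmat m φ))).det|)).withDensity f := by
        rw [big]
    _ = Measure.map (TMap m) (((volume.restrict (U m)).withDensity fun φ =>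
          ENNReal.ofReal
            |(LinearMap.toContinuousLinearMap (Matrix.toLin' (Tmat m φ))).det|).withDensity
          fun φ => f (TMap m φ)) := map_withDensity_comm _ hT hfm
    _ = Measure.map (TMap m) ((volume.restrict (U m)).withDensity fun φ =>
          ENNReal.ofReal
            |(LinearMap.toContinuousLinearMap (Matrix.toLin' (Tmat m φ))).det| *
            f (TMap m φ)) := by
        rw [← withDensity_mul _ hD (show Measurable fun φ => f (TMap m φ) from hfm.comp hT)]
        rfl
    _ = Measure.map (TMap m) ((volume.restrict (U m)).withDensity
          fun _ => ENNReal.ofReal ((2 / Real.pi) ^ m)) := by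
        congr 1
        apply withDensity_congr_ae
        filter_upwards [ae_restrict_mem hU] with φ hφ
        have hdet : (LinearMap.toContinuousLinearMap (Matrix.toLin' (Tmat m φ))).det
            = (Tmat m φ).det := by
          simp [ContinuousLinearMap.det, LinearMap.coe_toContinuousLinearMap, LinearMap.det_toLin']
        rw [hdet, hfdef]
        exact pointwise hφ
    _ = Measure.map (TMap m)
          (ENNReal.ofReal ((2 / Real.pi) ^ m) •
            volume.restrict (Set.univ.pi fun _ : Fin m => Set.Ioo 0 (Real.pi / 2))) := by
        rw [withDensity_const]
        rfl

end Stmt5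

/-- The pushforward under `TMap (n-1)` of the uniform probability measure
on `(0, π/2)^{n-1}` (density `(2/π)^{n-1}` w.r.t. Lebesgue measure) is absolutely
continuous w.r.t. Lebesgue measure on `ℝ^{n-1}` with density
`π^{-(n-1)} ∏_k 1/√(λ_k (1 - ∑_{i≤k} λ_i))` on the region
`{λ : λ_i > 0 ∀i, ∑ λ_i < 1}` and `0` outside. -/
theorem stmt_5 (n : ℕ) (hn : 2 ≤ n) :
    Measure.map (TMap (n - 1))
        (ENNReal.ofReal ((2 / Real.pi) ^ (n - 1)) •
          volume.restrict (Set.univ.pi fun _ : Fin (n - 1) => Set.Ioo 0 (Real.pi / 2))) =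
      volume.withDensity (fun lam : Fin (n - 1) → ℝ =>
        if (∀ i, 0 < lam i) ∧ ∑ i, lam i < 1 then
          ENNReal.ofReal ((Real.pi ^ (n - 1))⁻¹ *
            ∏ k : Fin (n - 1),
              1 / Real.sqrt (lam k *
                (1 - ∑ i ∈ Finset.univ.filter (fun i : Fin (n - 1) => i ≤ k), lam i)))
        else 0) :=
  Stmt5.key (n - 1)
end

section
/- For every s with 0 ≤ s < 1, the improper integral A(s) = ∫₀^{1−s} (λ · ln λ)/√(λ(1 − s − λ)) dλ converges and equals π·(1−s)·( −(ln 2 − 1/2) + (1/2)·ln(1−s) ). -/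
open MeasureTheory Real Set intervalIntegral

/-! Auxiliary lemmas -/

lemma aux_integrableOn_log_Ioc (b : ℝ) :
    IntegrableOn Real.log (Set.Ioc 0 b) volume := by
  have h1 : IntegrableOn (fun x : ℝ => -Real.log x) (Set.Ioc (0:ℝ) 1) volume := by
    apply integrableOn_deriv_of_nonneg (g := fun x : ℝ => x - x * Real.log x)
    · exact (continuous_id.sub Real.continuous_mul_log).continuousOn
    · intro x hx
      have h := (hasDerivAt_id x).sub (Real.hasDerivAt_mul_log (ne_of_gt hx.1))
      convert h using 1
      · rfl
      · rfl
      · rfl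
      · ring
    · intro x hx
      simp only [neg_nonneg]
      exact Real.log_nonpos hx.1.le hx.2.le
  have h2 : IntegrableOn Real.log (Set.Ioc (0:ℝ) 1) volume := by
    have h := h1.neg
    apply h.congr
    filter_upwards with x
    simp
  have h3 : IntegrableOn Real.log (Set.Ioc (1:ℝ) b) volume := by
    have hcont : ContinuousOn Real.log (Set.Icc (1:ℝ) b) := by
      intro x hx
      exact (Real.continuousAt_log (by rcases hx with ⟨hx1, _⟩; positivity)).continuousWithinAt
    exact hcont.integrableOn_Icc.mono_set Set.Ioc_subset_Icc_self
  have : Set.Ioc (0:ℝ) b ⊆ Set.Ioc 0 1 ∪ Set.Ioc 1 b := by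
    intro x hx
    rcases le_or_gt x 1 with h | h
    · exact Or.inl ⟨hx.1, h⟩
    · exact Or.inr ⟨h, hx.2⟩
  exact (h2.union h3).mono_set this

lemma aux_integrableOn_logsin :
    IntegrableOn (fun x : ℝ => Real.log (Real.sin x)) (Set.Ioc 0 (π/2)) volume := by
  have hmeas : AEStronglyMeasurable (fun x : ℝ => Real.log (Real.sin x))
      (volume.restrict (Set.Ioc 0 (π/2))) :=
    (Real.measurable_log.comp Real.measurable_sin).aestronglyMeasurable
  have hg : IntegrableOn (fun x : ℝ => Real.log (π/2) - Real.log x)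
      (Set.Ioc 0 (π/2)) volume :=
    (integrableOn_const (by simp [Real.pi_pos.le])).sub
      (aux_integrableOn_log_Ioc (π/2))
  refine Integrable.mono' hg hmeas ?_
  rw [ae_restrict_iff' measurableSet_Ioc]
  filter_upwards with x hx
  have hx0 : 0 < x := hx.1
  have hx2 : x ≤ π / 2 := hx.2
  have hsin_pos : 0 < Real.sin x := Real.sin_pos_of_pos_of_lt_pi hx0
    (lt_of_le_of_lt hx2 (by linarith [Real.pi_pos]))
  have hsin_le : Real.sin x ≤ 1 := Real.sin_le_one x
  have hlow : 2 / π * x ≤ Real.sin x := Real.mul_le_sin hx0.le hx2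
  have hlog_le : Real.log (Real.sin x) ≤ 0 := Real.log_nonpos hsin_pos.le hsin_le
  have h2pi : (0:ℝ) < 2 / π * x := by
    have := Real.pi_pos; positivity
  have : Real.log (2 / π * x) ≤ Real.log (Real.sin x) :=
    Real.log_le_log h2pi hlow
  have hsplit : Real.log (2 / π * x) = -Real.log (π/2) + Real.log x := by
    rw [Real.log_mul (by have := Real.pi_pos; positivity) (ne_of_gt hx0)]
    rw [show (2:ℝ)/π = (π/2)⁻¹ by field_simp]
    rw [Real.log_inv]
  rw [Real.norm_eq_abs, abs_of_nonpos hlog_le]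
  rw [hsplit] at this
  linarith

lemma aux_II_logsin : IntervalIntegrable (fun x : ℝ => Real.log (Real.sin x))
    volume 0 (π/2) :=
  (intervalIntegrable_iff_integrableOn_Ioc_of_le (by positivity)).mpr aux_integrableOn_logsin

lemma aux_II_logcos : IntervalIntegrable (fun x : ℝ => Real.log (Real.cos x))
    volume 0 (π/2) := by
  have h := aux_II_logsin.comp_sub_left (π/2)
  simp only [sub_zero, sub_self, Real.sin_pi_div_two_sub] at h
  exact h.symm

lemma aux_II_logsin' : IntervalIntegrable (fun x : ℝ => Real.log (Real.sin x))
    volume (π/2) π := by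
  have h := aux_II_logsin.comp_sub_left π
  simp only [sub_zero, Real.sin_pi_sub] at h
  have hπ : π - π/2 = π/2 := by ring
  rw [hπ] at h
  exact h.symm

lemma aux_integral_logsin : ∫ x in (0:ℝ)..(π/2), Real.log (Real.sin x)
    = -(π/2) * Real.log 2 := by
  set L := ∫ x in (0:ℝ)..(π/2), Real.log (Real.sin x) with hL
  -- ∫ log cos = L
  have hcos : ∫ x in (0:ℝ)..(π/2), Real.log (Real.cos x) = L := by
    have h := intervalIntegral.integral_comp_sub_left
      (a := 0) (b := π/2) (fun x => Real.log (Real.sin x)) (π/2)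
    simp only [sub_zero, sub_self, Real.sin_pi_div_two_sub] at h
    rw [hL, ← h]
  -- ∫_{π/2}^π log sin = L
  have hupper : ∫ x in (π/2:ℝ)..π, Real.log (Real.sin x) = L := by
    have h := intervalIntegral.integral_comp_sub_left
      (a := 0) (b := π/2) (fun x => Real.log (Real.sin x)) π
    simp only [sub_zero, Real.sin_pi_sub] at h
    have hπ : π - π/2 = π/2 := by ring
    rw [hπ] at h
    rw [hL, ← h]
  -- ∫_0^π log sin = 2L
  have hfull : ∫ x in (0:ℝ)..π, Real.log (Real.sin x) = 2 * L := by
    rw [← intervalIntegral.integral_add_adjacent_intervals aux_II_logsin aux_II_logsin']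
    rw [hupper]; ring
  -- ∫_0^{π/2} log sin 2x = L
  have hdouble : ∫ x in (0:ℝ)..(π/2), Real.log (Real.sin (2*x)) = L := by
    have h := intervalIntegral.integral_comp_mul_left
      (a := 0) (b := π/2) (fun x => Real.log (Real.sin x)) (c := 2) two_ne_zero
    simp only [mul_zero] at h
    rw [show (2:ℝ) * (π/2) = π by ring] at h
    rw [h, hfull]
    simp
  -- pointwise a.e.: log sin 2x = log 2 + log sin x + log cos x on (0, π/2)
  have hcongr : ∫ x in (0:ℝ)..(π/2), Real.log (Real.sin (2*x))
      = ∫ x in (0:ℝ)..(π/2), (Real.log 2 + Real.log (Real.sin x) + Real.log (Real.cos x)) := by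
    apply intervalIntegral.integral_congr_ae
    have hne : ∀ᵐ (x:ℝ), x ≠ π/2 := by
      rw [MeasureTheory.ae_iff]
      simpa using measure_singleton (μ := (volume : Measure ℝ)) (π/2)
    filter_upwards [hne] with x hxne hxI
    rw [Set.uIoc_of_le (by positivity : (0:ℝ) ≤ π/2)] at hxI
    have hx0 : 0 < x := hxI.1
    have hx2 : x < π/2 := lt_of_le_of_ne hxI.2 hxne
    have hsin : 0 < Real.sin x := Real.sin_pos_of_pos_of_lt_pi hx0
      (by linarith [Real.pi_pos])
    have hcos : 0 < Real.cos x := Real.cos_pos_of_mem_Ioo ⟨by linarith [Real.pi_pos], hx2⟩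
    rw [Real.sin_two_mul, Real.log_mul (by positivity) (ne_of_gt hcos),
      Real.log_mul two_ne_zero (ne_of_gt hsin)]
  have hsplit : ∫ x in (0:ℝ)..(π/2), (Real.log 2 + Real.log (Real.sin x) + Real.log (Real.cos x))
      = (π/2) * Real.log 2 + L + L := by
    rw [intervalIntegral.integral_add ((_root_.intervalIntegrable_const (c := Real.log 2)).add aux_II_logsin) aux_II_logcos,
      intervalIntegral.integral_add (_root_.intervalIntegrable_const (c := Real.log 2)) aux_II_logsin]
    rw [hcos, intervalIntegral.integral_const, ← hL]
    simp only [sub_zero, smul_eq_mul]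
  have : L = (π/2) * Real.log 2 + L + L := by rw [← hsplit, ← hcongr, hdouble]
  linarith

lemma aux_II_cos2_logsin : IntervalIntegrable
    (fun x : ℝ => Real.cos (2*x) * Real.log (Real.sin x)) volume 0 (π/2) := by
  refine (intervalIntegrable_iff_integrableOn_Ioc_of_le (by positivity)).mpr ?_
  refine Integrable.mono aux_integrableOn_logsin
    (((Real.measurable_cos.comp (measurable_const_mul 2)).mul
      (Real.measurable_log.comp Real.measurable_sin)).aestronglyMeasurable) ?_
  filter_upwards with x
  rw [Real.norm_eq_abs, Real.norm_eq_abs, abs_mul]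
  calc |Real.cos (2*x)| * |Real.log (Real.sin x)| ≤ 1 * |Real.log (Real.sin x)| :=
        mul_le_mul_of_nonneg_right (Real.abs_cos_le_one _) (abs_nonneg _)
    _ = |Real.log (Real.sin x)| := one_mul _

lemma aux_II_sinsq_logsin : IntervalIntegrable
    (fun x : ℝ => Real.sin x ^ 2 * Real.log (Real.sin x)) volume 0 (π/2) := by
  refine (intervalIntegrable_iff_integrableOn_Ioc_of_le (by positivity)).mpr ?_
  refine Integrable.mono aux_integrableOn_logsin
    (((Real.measurable_sin.pow_const 2).mul
      (Real.measurable_log.comp Real.measurable_sin)).aestronglyMeasurable) ?_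
  rw [ae_restrict_iff' measurableSet_Ioc]
  filter_upwards with x hx
  rw [Real.norm_eq_abs, Real.norm_eq_abs, abs_mul]
  have h1 : |Real.sin x ^ 2| ≤ 1 := by
    rw [abs_pow, ← one_pow 2]
    exact pow_le_pow_left₀ (abs_nonneg _) (Real.abs_sin_le_one x) 2
  calc |Real.sin x ^ 2| * |Real.log (Real.sin x)| ≤ 1 * |Real.log (Real.sin x)| :=
        mul_le_mul_of_nonneg_right h1 (abs_nonneg _)
    _ = |Real.log (Real.sin x)| := one_mul _

lemma aux_integral_cos2_logsin :
    ∫ x in (0:ℝ)..(π/2), Real.cos (2*x) * Real.log (Real.sin x) = -(π/4) := by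
  have hFTC := intervalIntegral.integral_eq_sub_of_hasDeriv_right_of_le
    (f := fun x : ℝ => Real.cos x * (Real.sin x * Real.log (Real.sin x)) - x/2
      - Real.sin (2*x)/4)
    (f' := fun x : ℝ => Real.cos (2*x) * Real.log (Real.sin x))
    (a := 0) (b := π/2) (by positivity)
    ?_ ?_ aux_II_cos2_logsin
  · rw [hFTC]
    norm_num [Real.cos_pi_div_two]
    rw [show (2:ℝ)*(π/2) = π by ring]
    norm_num [Real.sin_pi]
    try ring
  · apply Continuous.continuousOn
    exact ((Real.continuous_cos.mul
        (Real.continuous_mul_log.comp Real.continuous_sin)).sub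
        (continuous_id.div_const 2)).sub
        ((Real.continuous_sin.comp (continuous_const.mul continuous_id)).div_const 4)
  · intro x hx
    have hsin : 0 < Real.sin x := Real.sin_pos_of_pos_of_lt_pi hx.1
      (by have := Real.pi_pos; rcases hx with ⟨_, h2⟩; linarith)
    have h1 : HasDerivAt (fun y : ℝ => Real.sin y * Real.log (Real.sin y))
        ((Real.log (Real.sin x) + 1) * Real.cos x) x :=
      (Real.hasDerivAt_mul_log (ne_of_gt hsin)).comp x (Real.hasDerivAt_sin x)
    have h2 := (Real.hasDerivAt_cos x).mul h1
    have h3 : HasDerivAt (fun y : ℝ => y/2) (1/2) x := (hasDerivAt_id x).div_const 2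
    have h4 : HasDerivAt (fun y : ℝ => Real.sin (2*y)/4) (Real.cos (2*x) * 2 / 4) x := by
      have := ((Real.hasDerivAt_sin (2*x)).comp x ((hasDerivAt_id x).const_mul 2)).div_const 4
      simpa [Function.comp] using this
    have h5 := (h2.sub h3).sub h4
    refine (h5.congr_deriv ?_).hasDerivWithinAt
    linear_combination (-(Real.log (Real.sin x)) - 1/2) * (Real.cos_two_mul x)
      - Real.log (Real.sin x) * (Real.sin_sq_add_cos_sq x)

lemma aux_integral_sinsq_logsin :
    ∫ x in (0:ℝ)..(π/2), Real.sin x ^ 2 * Real.log (Real.sin x)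
      = π/8 - π/4 * Real.log 2 := by
  have hrw : (fun x : ℝ => Real.sin x ^ 2 * Real.log (Real.sin x))
      = fun x : ℝ => (1/2) * Real.log (Real.sin x)
        - (1/2) * (Real.cos (2*x) * Real.log (Real.sin x)) := by
    funext x
    rw [Real.sin_sq_eq_half_sub]
    ring
  rw [hrw, intervalIntegral.integral_sub (aux_II_logsin.const_mul _)
    (aux_II_cos2_logsin.const_mul _), intervalIntegral.integral_const_mul,
    intervalIntegral.integral_const_mul, aux_integral_logsin, aux_integral_cos2_logsin]
  ring

/-- For `0 ≤ s < 1`, the improper integral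
`A(s) = ∫₀^{1−s} λ ln λ / √(λ(1−s−λ)) dλ` converges and equals
`π(1−s)(−(ln 2 − 1/2) + (1/2) ln(1−s))`. -/
theorem stmt_9 (s : ℝ) (hs0 : 0 ≤ s) (hs1 : s < 1) :
    IntegrableOn (fun l : ℝ => l * Real.log l / Real.sqrt (l * (1 - s - l)))
      (Set.Ioo 0 (1 - s)) volume ∧
    (∫ l in Set.Ioo (0 : ℝ) (1 - s), l * Real.log l / Real.sqrt (l * (1 - s - l)))
      = Real.pi * (1 - s) * (-(Real.log 2 - 1 / 2) + 1 / 2 * Real.log (1 - s)) := by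
  have hc : 0 < 1 - s := by linarith
  set g : ℝ → ℝ := fun l => l * Real.log l / Real.sqrt (l * (1 - s - l)) with hg
  set A : Set ℝ := Set.Ioo 0 (π/2) with hA
  set φ : ℝ → ℝ := fun x => (1 - s) * Real.sin x ^ 2 with hφ
  set φ' : ℝ → ℝ := fun x => (1 - s) * (2 * Real.sin x * Real.cos x) with hφ'
  have hderiv : ∀ x ∈ A, HasDerivWithinAt φ (φ' x) A x := by
    intro x _
    have h := ((Real.hasDerivAt_sin x).pow 2).const_mul (1 - s)
    refine (h.congr_deriv ?_).hasDerivWithinAt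
    simp [hφ']
    try ring
  have hmono : StrictMonoOn φ A := by
    intro x hx y hy hxy
    have hsx : 0 < Real.sin x := Real.sin_pos_of_pos_of_lt_pi hx.1
      (by have := Real.pi_pos; rcases hx with ⟨_, h2⟩; linarith)
    have hlt : Real.sin x < Real.sin y := Real.strictMonoOn_sin
      ⟨by have := Real.pi_pos; rcases hx with ⟨h1, _⟩; linarith, hx.2.le⟩
      ⟨by have := Real.pi_pos; rcases hy with ⟨h1, _⟩; linarith, hy.2.le⟩ hxy
    have : Real.sin x ^ 2 < Real.sin y ^ 2 := by nlinarith
    simpa [hφ] using mul_lt_mul_of_pos_left this hc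
  have hinj : Set.InjOn φ A := hmono.injOn
  have himg : φ '' A = Set.Ioo 0 (1 - s) := by
    apply Set.Subset.antisymm
    · rintro _ ⟨x, hx, rfl⟩
      have hsx : 0 < Real.sin x := Real.sin_pos_of_pos_of_lt_pi hx.1
        (by have := Real.pi_pos; rcases hx with ⟨_, h2⟩; linarith)
      have hlt : Real.sin x < 1 := by
        have := Real.strictMonoOn_sin
          ⟨by have := Real.pi_pos; rcases hx with ⟨h1, _⟩; linarith, hx.2.le⟩
          ⟨by have := Real.pi_pos; linarith, le_refl _⟩ hx.2
        simpa using this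
      constructor
      · have : 0 < Real.sin x ^ 2 := by positivity
        simp only [hφ]
        positivity
      · have h2 : Real.sin x ^ 2 < 1 := by nlinarith
        calc (1 - s) * Real.sin x ^ 2 < (1 - s) * 1 := mul_lt_mul_of_pos_left h2 hc
          _ = 1 - s := mul_one _
    · rintro y ⟨hy0, hy1⟩
      set t := Real.sqrt (y / (1 - s)) with ht
      have htpos : 0 < t := Real.sqrt_pos.mpr (by positivity)
      have ht1 : t < 1 := by
        have h := Real.sqrt_lt_sqrt (by positivity : (0:ℝ) ≤ y / (1-s))
          ((div_lt_one hc).mpr hy1)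
        simpa [Real.sqrt_one] using h
      refine ⟨Real.arcsin t, ⟨Real.arcsin_pos.mpr htpos,
        Real.arcsin_lt_pi_div_two.mpr ht1⟩, ?_⟩
      have hsin : Real.sin (Real.arcsin t) = t :=
        Real.sin_arcsin (by linarith) ht1.le
      simp only [hφ, hsin, ht]
      rw [← ht, hsin, ht, Real.sq_sqrt (by positivity)]
      field_simp
  have heqon : Set.EqOn (fun x => |φ' x| • g (φ x))
      (fun x => 2 * (1 - s) * Real.log (1 - s) * Real.sin x ^ 2
        + 4 * (1 - s) * (Real.sin x ^ 2 * Real.log (Real.sin x))) A := by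
    intro x hx
    have hsx : 0 < Real.sin x := Real.sin_pos_of_pos_of_lt_pi hx.1
      (by have := Real.pi_pos; rcases hx with ⟨_, h2⟩; linarith)
    have hcx : 0 < Real.cos x := Real.cos_pos_of_mem_Ioo
      ⟨by have := Real.pi_pos; rcases hx with ⟨h1, _⟩; linarith, hx.2⟩
    have hsqrt : Real.sqrt ((1-s) * Real.sin x ^ 2 * (1 - s - (1-s) * Real.sin x ^ 2))
        = (1-s) * (Real.sin x * Real.cos x) := by
      have h1 : 1 - s - (1-s) * Real.sin x ^ 2 = (1-s) * Real.cos x ^ 2 := by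
        rw [Real.cos_sq']
        ring
      rw [h1, show (1-s) * Real.sin x ^ 2 * ((1-s) * Real.cos x ^ 2)
        = ((1-s) * (Real.sin x * Real.cos x))^2 by ring,
        Real.sqrt_sq (by positivity)]
    have hlog : Real.log ((1-s) * Real.sin x ^ 2)
        = Real.log (1-s) + 2 * Real.log (Real.sin x) := by
      rw [Real.log_mul (ne_of_gt hc) (by positivity), Real.log_pow]
      norm_num
    simp only [hφ', hφ, hg, smul_eq_mul]
    rw [hsqrt, hlog, abs_of_pos (by positivity)]
    field_simp
    ring
  have hIntRHS : IntegrableOn (fun x => 2 * (1 - s) * Real.log (1 - s) * Real.sin x ^ 2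
      + 4 * (1 - s) * (Real.sin x ^ 2 * Real.log (Real.sin x))) A volume := by
    apply Integrable.add
    · exact (Continuous.integrableOn_Icc
        (continuous_const.mul (Real.continuous_sin.pow 2))).mono_set Set.Ioo_subset_Icc_self
    · have h := ((intervalIntegrable_iff_integrableOn_Ioc_of_le
        (by positivity : (0:ℝ) ≤ π/2)).mp aux_II_sinsq_logsin).const_mul (4 * (1 - s))
      exact (IntegrableOn.mono_set h Set.Ioo_subset_Ioc_self).congr_fun
        (fun x _ => by ring) measurableSet_Ioo
  have hIntA : IntegrableOn (fun x => |φ' x| • g (φ x)) A volume :=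
    hIntRHS.congr_fun (fun x hx => (heqon hx).symm) measurableSet_Ioo
  have hInt : IntegrableOn g (Set.Ioo 0 (1 - s)) volume := by
    rw [← himg]
    exact (integrableOn_image_iff_integrableOn_abs_deriv_smul measurableSet_Ioo
      hderiv hinj g).mpr hIntA
  refine ⟨hInt, ?_⟩
  have hIoo_sinsq : ∫ x in A, Real.sin x ^ 2 = π/4 := by
    rw [hA, ← integral_Ioc_eq_integral_Ioo,
      ← intervalIntegral.integral_of_le (by positivity : (0:ℝ) ≤ π/2),
      integral_sin_sq]
    simp
    ring
  have hIoo_sinsq_log : ∫ x in A, Real.sin x ^ 2 * Real.log (Real.sin x)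
      = π/8 - π/4 * Real.log 2 := by
    rw [hA, ← integral_Ioc_eq_integral_Ioo,
      ← intervalIntegral.integral_of_le (by positivity : (0:ℝ) ≤ π/2),
      aux_integral_sinsq_logsin]
  have hInt1 : IntegrableOn (fun x => 2 * (1 - s) * Real.log (1 - s) * Real.sin x ^ 2)
      A volume :=
    (Continuous.integrableOn_Icc
      (continuous_const.mul (Real.continuous_sin.pow 2))).mono_set Set.Ioo_subset_Icc_self
  have hInt2 : IntegrableOn
      (fun x => 4 * (1 - s) * (Real.sin x ^ 2 * Real.log (Real.sin x))) A volume := by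
    have h := ((intervalIntegrable_iff_integrableOn_Ioc_of_le
      (by positivity : (0:ℝ) ≤ π/2)).mp aux_II_sinsq_logsin).const_mul (4 * (1 - s))
    exact (IntegrableOn.mono_set h Set.Ioo_subset_Ioc_self).congr_fun
      (fun x _ => by ring) measurableSet_Ioo
  calc (∫ l in Set.Ioo (0:ℝ) (1 - s), g l) = ∫ x in A, |φ' x| • g (φ x) := by
        rw [← himg]
        exact integral_image_eq_integral_abs_deriv_smul measurableSet_Ioo hderiv hinj g
    _ = ∫ x in A, (2 * (1 - s) * Real.log (1 - s) * Real.sin x ^ 2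
        + 4 * (1 - s) * (Real.sin x ^ 2 * Real.log (Real.sin x))) :=
        setIntegral_congr_fun measurableSet_Ioo heqon
    _ = (∫ x in A, 2 * (1 - s) * Real.log (1 - s) * Real.sin x ^ 2)
        + ∫ x in A, 4 * (1 - s) * (Real.sin x ^ 2 * Real.log (Real.sin x)) :=
        integral_add hInt1 hInt2
    _ = 2 * (1 - s) * Real.log (1 - s) * (π/4)
        + 4 * (1 - s) * (π/8 - π/4 * Real.log 2) := by
        rw [MeasureTheory.integral_const_mul, MeasureTheory.integral_const_mul, hIoo_sinsq, hIoo_sinsq_log]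
    _ = Real.pi * (1 - s) * (-(Real.log 2 - 1 / 2) + 1 / 2 * Real.log (1 - s)) := by
        ring
end

section
/- For every integer j ≥ 1, the iterated improper integral B_j = ∫₀¹ dλ₁ ∫₀^{1−λ₁} dλ₂ ⋯ ∫₀^{1−λ₁−⋯−λ_{j-1}} dλ_j · (1 − ∑_{i=1}^{j} λ_i) · ∏_{k=1}^{j} 1/√(λ_k·(1 − ∑_{i=1}^{k} λ_i)) converges and equals (π/2)^j. -/
open MeasureTheory Real Set

noncomputable def oneF (x : ℝ) : ℝ := arcsin (2 * x - 1) / 2 - Real.sqrt (x * (1 - x))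

lemma oneF_deriv {x : ℝ} (hx : x ∈ Ioo (0:ℝ) 1) :
    HasDerivAt oneF (Real.sqrt (x / (1 - x))) x := by
  obtain ⟨h0, h1⟩ := hx
  have hx1 : 0 < 1 - x := by linarith
  have hy : 0 < x * (1 - x) := mul_pos h0 hx1
  set y := Real.sqrt (x * (1 - x)) with hy_def
  have hy0 : 0 < y := Real.sqrt_pos.2 hy
  have hysq : y ^ 2 = x * (1 - x) := Real.sq_sqrt hy.le
  -- arcsin part
  have ha : HasDerivAt (fun x : ℝ => arcsin (2 * x - 1) / 2) (1 / (2 * y)) x := by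
    have hne1 : 2 * x - 1 ≠ -1 := by intro h; nlinarith
    have hne2 : 2 * x - 1 ≠ 1 := by intro h; nlinarith
    have h := (Real.hasDerivAt_arcsin hne1 hne2).comp x
      (((hasDerivAt_id x).const_mul 2).sub_const 1)
    have h2 : (1 - (2 * x - 1) ^ 2) = 4 * (x * (1 - x)) := by ring
    have h3 : Real.sqrt (1 - (2 * x - 1) ^ 2) = 2 * y := by
      rw [h2, show (4 : ℝ) * (x * (1 - x)) = 2 ^ 2 * (x * (1 - x)) by ring,
        Real.sqrt_mul (by positivity), Real.sqrt_sq (by norm_num)]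
    have := h.div_const 2
    refine this.congr_deriv ?_; symm
    rw [h3]; field_simp
  -- sqrt part
  have hb : HasDerivAt (fun x : ℝ => Real.sqrt (x * (1 - x))) ((1 - 2 * x) / (2 * y)) x := by
    have hinner : HasDerivAt (fun x : ℝ => x * (1 - x)) (1 - 2 * x) x := by
      have := (hasDerivAt_id x).mul ((hasDerivAt_const x 1).sub (hasDerivAt_id x))
      refine this.congr_deriv ?_; symm; simp [id]; ring
    have h := (Real.hasDerivAt_sqrt hy.ne').comp x hinner
    refine h.congr_deriv ?_; symm
    rw [← hy_def]; field_simp; try ring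
  have := ha.sub hb
  refine this.congr_deriv ?_; symm
  have hsx : Real.sqrt x > 0 := Real.sqrt_pos.2 h0
  have h4 : Real.sqrt (x / (1 - x)) = Real.sqrt x / Real.sqrt (1 - x) :=
    Real.sqrt_div h0.le _
  have h5 : y = Real.sqrt x * Real.sqrt (1 - x) := Real.sqrt_mul h0.le _
  rw [h4, h5]
  have hs1 : 0 < Real.sqrt (1 - x) := Real.sqrt_pos.2 hx1
  field_simp
  nlinarith [Real.sq_sqrt h0.le, Real.sq_sqrt hx1.le, Real.sqrt_nonneg x, Real.sqrt_nonneg (1-x)]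

lemma oneDim_intervalIntegrable :
    IntervalIntegrable (fun x : ℝ => Real.sqrt (x / (1 - x))) volume 0 1 := by
  have hg : IntervalIntegrable (fun x : ℝ => (1 - x) ^ (-(1/2) : ℝ)) volume 0 1 := by
    have h := (intervalIntegral.intervalIntegrable_rpow' (a := 0) (b := 1) (r := -(1/2)) (by norm_num)).comp_sub_left 1
    simpa using h.symm
  apply hg.mono_fun
  · exact ((measurable_id.div (measurable_const.sub measurable_id)).sqrt).aestronglyMeasurable
  · rw [Filter.EventuallyLE, ae_restrict_iff' measurableSet_uIoc]
    filter_upwards with x hx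
    rw [Set.uIoc_of_le (by norm_num : (0:ℝ) ≤ 1)] at hx
    obtain ⟨h0, h1⟩ := hx
    simp only [Real.norm_eq_abs, abs_of_nonneg (Real.sqrt_nonneg _)]
    rcases eq_or_lt_of_le h1 with h1 | h1
    · subst h1
      simp only [sub_self, div_zero, Real.sqrt_zero]
      exact abs_nonneg _
    · have hx1 : 0 < 1 - x := by linarith
      rw [abs_of_nonneg (Real.rpow_nonneg hx1.le _)]
      rw [Real.sqrt_div h0.le, Real.rpow_neg hx1.le, ← Real.sqrt_eq_rpow]
      rw [div_le_iff₀ (Real.sqrt_pos.2 hx1)]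
      rw [inv_mul_cancel₀ (Real.sqrt_pos.2 hx1).ne']
      exact Real.sqrt_le_one.mpr h1.le

lemma oneDim_integral : ∫ x in Ioo (0:ℝ) 1, Real.sqrt (x / (1 - x)) = π / 2 := by
  have h := intervalIntegral.integral_eq_sub_of_hasDeriv_right_of_le (f := oneF)
    (f' := fun x => Real.sqrt (x / (1 - x))) (by norm_num : (0:ℝ) ≤ 1)
    ?_ (fun x hx => (oneF_deriv hx).hasDerivWithinAt) oneDim_intervalIntegrable
  · rw [intervalIntegral.integral_of_le (by norm_num : (0:ℝ) ≤ 1),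
      MeasureTheory.integral_Ioc_eq_integral_Ioo] at h
    rw [h]
    simp [oneF]
    norm_num [Real.arcsin_one]
    ring
  · apply ContinuousOn.sub
    · exact (Real.continuous_arcsin.comp (by continuity)).continuousOn.div_const 2
    · exact (Real.continuous_sqrt.comp (by continuity)).continuousOn

lemma oneDim_integrableOn :
    IntegrableOn (fun x : ℝ => Real.sqrt (x / (1 - x))) (Ioo (0:ℝ) 1) volume := by
  have := (intervalIntegrable_iff_integrableOn_Ioc_of_le (by norm_num : (0:ℝ) ≤ 1)).1
    oneDim_intervalIntegrable
  exact this.mono_set Ioo_subset_Ioc_self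

noncomputable section StmtAux

variable {n : ℕ}

/-- prefix product of the first `m` coordinates -/
def Rpre (u : Fin n → ℝ) (m : ℕ) : ℝ :=
  ∏ i ∈ Finset.univ.filter (fun i : Fin n => (i : ℕ) < m), u i

/-- the change of variables map -/
def Tmap (u : Fin n → ℝ) : Fin n → ℝ := fun k => Rpre u k.val * (1 - u k)

lemma Rpre_zero (u : Fin n → ℝ) : Rpre u 0 = 1 := by simp [Rpre]

lemma filter_lt_succ {m : ℕ} (hm : m < n) :
    Finset.univ.filter (fun i : Fin n => (i : ℕ) < m + 1) =
      insert ⟨m, hm⟩ (Finset.univ.filter (fun i : Fin n => (i : ℕ) < m)) := by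
  ext i
  simp only [Finset.mem_filter, Finset.mem_univ, true_and, Finset.mem_insert, Fin.ext_iff]
  omega

lemma Rpre_succ (u : Fin n → ℝ) {m : ℕ} (hm : m < n) :
    Rpre u (m + 1) = u ⟨m, hm⟩ * Rpre u m := by
  rw [Rpre, filter_lt_succ hm, Finset.prod_insert (by simp)]
  rfl

lemma Rpre_pos {u : Fin n → ℝ} (hu : ∀ i, 0 < u i) (m : ℕ) : 0 < Rpre u m :=
  Finset.prod_pos fun i _ => hu i

lemma sum_Tmap (u : Fin n → ℝ) :
    ∀ m, m ≤ n → ∑ i ∈ Finset.univ.filter (fun i : Fin n => (i : ℕ) < m), Tmap u i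
      = 1 - Rpre u m := by
  intro m
  induction m with
  | zero => intro _; simp [Rpre_zero]
  | succ m ih =>
      intro hm
      have hmn : m < n := hm
      rw [filter_lt_succ hmn, Finset.sum_insert (by simp), ih (le_of_lt hmn),
        Rpre_succ u hmn]
      show Rpre u (⟨m, hmn⟩ : Fin n).val * (1 - u ⟨m, hmn⟩) + (1 - Rpre u m) = _
      ring

lemma filter_le_eq (k : Fin n) :
    Finset.univ.filter (fun i : Fin n => i ≤ k) =
      Finset.univ.filter (fun i : Fin n => (i : ℕ) < k.val + 1) := by
  ext i
  simp only [Finset.mem_filter, Finset.mem_univ, true_and, Fin.le_def]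
  omega

lemma filter_lt_n : Finset.univ.filter (fun i : Fin n => (i : ℕ) < n) = Finset.univ := by
  ext i; simp [i.isLt]

lemma Rpre_n (u : Fin n → ℝ) : Rpre u n = ∏ i, u i := by
  rw [Rpre, filter_lt_n]

lemma sum_Tmap_univ (u : Fin n → ℝ) : ∑ i, Tmap u i = 1 - ∏ i, u i := by
  have h := sum_Tmap u n le_rfl
  rw [filter_lt_n] at h
  rw [h, Rpre_n]

lemma sum_Tmap_le (u : Fin n → ℝ) (k : Fin n) :
    ∑ i ∈ Finset.univ.filter (fun i : Fin n => i ≤ k), Tmap u i = 1 - Rpre u (k.val + 1) := by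
  rw [filter_le_eq, sum_Tmap u (k.val + 1) k.isLt]

/-- the domain of integration in `u`-space -/
def Udom (n : ℕ) : Set (Fin n → ℝ) := Set.pi Set.univ fun _ : Fin n => Ioo (0:ℝ) 1

lemma mem_Udom {u : Fin n → ℝ} : u ∈ Udom n ↔ ∀ i, 0 < u i ∧ u i < 1 := by
  simp [Udom, Set.mem_pi, Set.mem_Ioo]

/-- the target set -/
def Sdom (n : ℕ) : Set (Fin n → ℝ) :=
  {lam : Fin n → ℝ | (∀ i, 0 < lam i) ∧ ∑ i, lam i < 1}

lemma Rpre_eq_of_Tmap_eq {u v : Fin n → ℝ} (h : Tmap u = Tmap v) :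
    ∀ m, m ≤ n → Rpre u m = Rpre v m := by
  intro m hm
  have h1 := sum_Tmap u m hm
  have h2 := sum_Tmap v m hm
  rw [h] at h1
  linarith [h1, h2]

lemma Tmap_injOn : Set.InjOn (Tmap (n := n)) (Udom n) := by
  intro u hu v hv h
  rw [mem_Udom] at hu hv
  funext k
  have h1 : Rpre u k.val = Rpre v k.val := Rpre_eq_of_Tmap_eq h k.val k.isLt.le
  have h2 : Rpre u (k.val + 1) = Rpre v (k.val + 1) := Rpre_eq_of_Tmap_eq h _ k.isLt
  rw [Rpre_succ u k.isLt, Rpre_succ v k.isLt, h1] at h2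
  have hpos : 0 < Rpre v k.val := Rpre_pos (fun i => (hv i).1) _
  have : (⟨k.val, k.isLt⟩ : Fin n) = k := Fin.eta k k.isLt
  rw [this] at h2
  exact mul_right_cancel₀ hpos.ne' h2

lemma Tmap_image : Tmap '' (Udom n) = Sdom n := by
  apply Set.Subset.antisymm
  · rintro _ ⟨u, hu, rfl⟩
    rw [mem_Udom] at hu
    constructor
    · intro k
      exact mul_pos (Rpre_pos (fun i => (hu i).1) _) (by linarith [(hu k).2])
    · rw [sum_Tmap_univ]
      have : 0 < ∏ i, u i := Finset.prod_pos fun i _ => (hu i).1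
      linarith
  · rintro lam ⟨hpos, hsum⟩
    set s : ℕ → ℝ := fun m => 1 - ∑ i ∈ Finset.univ.filter (fun i : Fin n => (i : ℕ) < m), lam i
      with hs_def
    have hs0 : s 0 = 1 := by simp [hs_def]
    have hs_pos : ∀ m, 0 < s m := by
      intro m
      have : ∑ i ∈ Finset.univ.filter (fun i : Fin n => (i : ℕ) < m), lam i ≤ ∑ i, lam i :=
        Finset.sum_le_sum_of_subset_of_nonneg (Finset.subset_univ _)
          (fun i _ _ => (hpos i).le)
      simp only [hs_def]
      linarith
    have hs_succ : ∀ m (hm : m < n), s (m + 1) = s m - lam ⟨m, hm⟩ := by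
      intro m hm
      simp only [hs_def]
      rw [filter_lt_succ hm, Finset.sum_insert (by simp)]
      ring
    refine ⟨fun k => s (k.val + 1) / s k.val, ?_, ?_⟩
    · rw [mem_Udom]
      intro k
      constructor
      · exact div_pos (hs_pos _) (hs_pos _)
      · rw [div_lt_one (hs_pos _), hs_succ k.val k.isLt]
        have h := hpos ⟨k.val, k.isLt⟩
        linarith
    · have hR : ∀ m, m ≤ n → Rpre (fun k : Fin n => s (k.val + 1) / s k.val) m = s m := by
        intro m
        induction m with
        | zero => intro _; rw [Rpre_zero, hs0]
        | succ m ih =>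
            intro hm
            have hmn : m < n := hm
            rw [Rpre_succ _ hmn, ih hmn.le]
            field_simp [ (hs_pos m).ne' ]
      funext k
      show Rpre _ k.val * (1 - s (k.val + 1) / s k.val) = lam k
      rw [hR k.val k.isLt.le, hs_succ k.val k.isLt]
      have h1 := hs_pos k.val
      field_simp
      ring


/-- the sets `{i | i < k}` -/
def Ak (k : Fin n) : Finset (Fin n) := Finset.univ.filter (· < k)

lemma prod_Ak (u : Fin n → ℝ) (k : Fin n) : ∏ i ∈ Ak k, u i = Rpre u k.val := by
  unfold Ak Rpre
  congr 1

/-- derivative of the `k`-th component of `Tmap` -/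
def Ek (u : Fin n → ℝ) (k : Fin n) : (Fin n → ℝ) →L[ℝ] ℝ :=
  (∏ i ∈ Ak k, u i) • (-(ContinuousLinearMap.proj (R := ℝ) (φ := fun _ : Fin n => ℝ) k)) +
    (1 - u k) • (∑ i ∈ Ak k, (∏ l ∈ (Ak k).erase i, u l) •
      (ContinuousLinearMap.proj (R := ℝ) (φ := fun _ : Fin n => ℝ) i))

/-- derivative of `Tmap` -/
def Dmap (u : Fin n → ℝ) : (Fin n → ℝ) →L[ℝ] (Fin n → ℝ) :=
  ContinuousLinearMap.pi (fun k => Ek u k)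

lemma hasFDerivAt_Tmap (u : Fin n → ℝ) : HasFDerivAt Tmap (Dmap u) u := by
  have heq : Tmap (n := n) = fun (v : Fin n → ℝ) (k : Fin n) => (∏ i ∈ Ak k, v i) * (1 - v k) := by
    funext v k
    rw [Tmap, prod_Ak]
  rw [heq, Dmap]
  apply hasFDerivAt_pi.2
  intro k
  have h1 : HasFDerivAt (fun v : Fin n → ℝ => ∏ i ∈ Ak k, v i)
      (∑ i ∈ Ak k, (∏ l ∈ (Ak k).erase i, u l) •
        (ContinuousLinearMap.proj (R := ℝ) (φ := fun _ : Fin n => ℝ) i)) u :=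
    HasFDerivAt.finset_prod (fun i _ => hasFDerivAt_apply (𝕜 := ℝ) i u)
  have h2 : HasFDerivAt (fun v : Fin n → ℝ => 1 - v k)
      (-(ContinuousLinearMap.proj (R := ℝ) (φ := fun _ : Fin n => ℝ) k)) u := by
    exact ((hasFDerivAt_const (1:ℝ) u).sub (hasFDerivAt_apply (𝕜 := ℝ) k u)).congr_fderiv (by simp)
  exact h1.mul h2

lemma Dmap_matrix (u : Fin n → ℝ) (k m : Fin n) :
    LinearMap.toMatrix' ((Dmap u) : (Fin n → ℝ) →ₗ[ℝ] (Fin n → ℝ)) k m =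
      (∏ i ∈ Ak k, u i) * (-(if k = m then (1:ℝ) else 0)) +
        (1 - u k) * ∑ i ∈ Ak k, (∏ l ∈ (Ak k).erase i, u l) * (if i = m then (1:ℝ) else 0) := by
  rw [LinearMap.toMatrix'_apply]
  simp only [ContinuousLinearMap.coe_coe, Dmap, ContinuousLinearMap.pi_apply, Ek,
    ContinuousLinearMap.add_apply, ContinuousLinearMap.smul_apply,
    ContinuousLinearMap.neg_apply, ContinuousLinearMap.proj_apply,
    ContinuousLinearMap.sum_apply, smul_eq_mul, Pi.single_apply]

lemma det_Dmap (u : Fin n → ℝ) :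
    (Dmap u).det = ∏ k : Fin n, (-Rpre u k.val) := by
  have h1 : (Dmap u).det =
      (LinearMap.toMatrix' ((Dmap u) : (Fin n → ℝ) →ₗ[ℝ] (Fin n → ℝ))).det :=
    (LinearMap.det_toMatrix' _).symm
  rw [h1]
  rw [Matrix.det_of_lowerTriangular _ ?tri]
  case tri =>
    intro k m h
    have hkm : k < m := h
    rw [Dmap_matrix]
    rw [if_neg (ne_of_lt hkm)]
    rw [Finset.sum_eq_zero]
    · ring
    · intro i hi
      have : i < k := by simpa [Ak] using hi
      rw [if_neg (ne_of_lt (lt_trans this hkm))]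
      ring
  · apply Finset.prod_congr rfl
    intro k _
    rw [Dmap_matrix, if_pos rfl, Finset.sum_eq_zero, prod_Ak]
    · ring
    · intro i hi
      have : i < k := by simpa [Ak] using hi
      rw [if_neg (ne_of_lt this)]
      ring

lemma abs_det_Dmap {u : Fin n → ℝ} (hu : ∀ i, 0 < u i) :
    |(Dmap u).det| = ∏ k : Fin n, Rpre u k.val := by
  rw [det_Dmap, Finset.abs_prod]
  exact Finset.prod_congr rfl fun k _ => by
    rw [abs_neg, abs_of_pos (Rpre_pos hu _)]

lemma sqrt_pointwise {x : ℝ} (hx : 0 < x) (hx1 : x < 1) :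
    x / Real.sqrt (x * (1 - x)) = Real.sqrt (x / (1 - x)) := by
  have h1 : (0:ℝ) < 1 - x := by linarith
  rw [Real.sqrt_mul hx.le, Real.sqrt_div hx.le, ← div_div, Real.div_sqrt]

lemma key_integrand {u : Fin n → ℝ} (hu : ∀ i, 0 < u i ∧ u i < 1) :
    |(Dmap u).det| * ((1 - ∑ i, Tmap u i) *
      ∏ k, 1 / Real.sqrt (Tmap u k *
        (1 - ∑ i ∈ Finset.univ.filter (fun i : Fin n => i ≤ k), Tmap u i))) =
    ∏ k, Real.sqrt (u k / (1 - u k)) := by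
  have hupos : ∀ i, 0 < u i := fun i => (hu i).1
  have h1 : 1 - ∑ i, Tmap u i = ∏ i, u i := by
    rw [sum_Tmap_univ]; ring
  have h3 : ∀ k : Fin n, Real.sqrt (Tmap u k *
      (1 - ∑ i ∈ Finset.univ.filter (fun i : Fin n => i ≤ k), Tmap u i)) =
      Rpre u k.val * Real.sqrt (u k * (1 - u k)) := by
    intro k
    have h2 : Tmap u k *
        (1 - ∑ i ∈ Finset.univ.filter (fun i : Fin n => i ≤ k), Tmap u i) =
        (Rpre u k.val)^2 * (u k * (1 - u k)) := by
      rw [sum_Tmap_le]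
      have hss : (1:ℝ) - (1 - Rpre u (k.val+1)) = Rpre u (k.val+1) := by ring
      rw [hss, Rpre_succ u k.isLt, Fin.eta, Tmap]
      ring
    rw [h2, Real.sqrt_mul (sq_nonneg _), Real.sqrt_sq (Rpre_pos hupos _).le]
  rw [abs_det_Dmap hupos, h1]
  simp only [h3]
  rw [← Finset.prod_mul_distrib, ← Finset.prod_mul_distrib]
  apply Finset.prod_congr rfl
  intro k _
  have hR := Rpre_pos hupos k.val
  have hs : (0:ℝ) < Real.sqrt (u k * (1 - u k)) := by
    apply Real.sqrt_pos.2
    have := (hu k).1; have := (hu k).2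
    nlinarith
  rw [← sqrt_pointwise (hu k).1 (hu k).2]
  field_simp

end StmtAux

/-- For every `j ≥ 1`, the (iterated) improper integral
`B_j = ∫_{λ_i > 0, ∑ λ_i < 1} (1 − ∑ λ_i) ∏_{k} 1/√(λ_k (1 − ∑_{i≤k} λ_i)) dλ`
converges and equals `(π/2)^j`. -/
theorem stmt_10 (j : ℕ) (hj : 1 ≤ j) :
    IntegrableOn
      (fun lam : Fin j → ℝ =>
        (1 - ∑ i, lam i) *
          ∏ k, 1 / Real.sqrt (lam k *
            (1 - ∑ i ∈ Finset.univ.filter (fun i : Fin j => i ≤ k), lam i)))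
      {lam : Fin j → ℝ | (∀ i, 0 < lam i) ∧ ∑ i, lam i < 1} volume ∧
    (∫ lam in {lam : Fin j → ℝ | (∀ i, 0 < lam i) ∧ ∑ i, lam i < 1},
        (1 - ∑ i, lam i) *
          ∏ k, 1 / Real.sqrt (lam k *
            (1 - ∑ i ∈ Finset.univ.filter (fun i : Fin j => i ≤ k), lam i)))
      = (Real.pi / 2) ^ j := by
  set F : (Fin j → ℝ) → ℝ := fun lam =>
    (1 - ∑ i, lam i) *
      ∏ k, 1 / Real.sqrt (lam k *
        (1 - ∑ i ∈ Finset.univ.filter (fun i : Fin j => i ≤ k), lam i)) with hF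
  have hUmeas : MeasurableSet (Udom j) := MeasurableSet.univ_pi fun _ => measurableSet_Ioo
  have hderiv : ∀ u ∈ Udom j, HasFDerivWithinAt Tmap (Dmap u) (Udom j) u :=
    fun u _ => (hasFDerivAt_Tmap u).hasFDerivWithinAt
  have himg : Tmap '' (Udom j) = {lam : Fin j → ℝ | (∀ i, 0 < lam i) ∧ ∑ i, lam i < 1} :=
    Tmap_image
  have hEq : ∀ u ∈ Udom j, |(Dmap u).det| • F (Tmap u)
      = ∏ k, Real.sqrt (u k / (1 - u k)) := by
    intro u hu
    rw [smul_eq_mul, hF]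
    exact key_integrand (mem_Udom.1 hu)
  set h1d : ℝ → ℝ := (Ioo (0:ℝ) 1).indicator (fun x => Real.sqrt (x / (1 - x))) with hh
  have hint1 : Integrable h1d := (integrable_indicator_iff measurableSet_Ioo).2 oneDim_integrableOn
  have hprod : Integrable (fun u : Fin j → ℝ => ∏ k, h1d (u k)) :=
    Integrable.fintype_prod fun _ => hint1
  have hindic : (Udom j).indicator (fun u : Fin j → ℝ => ∏ k, Real.sqrt (u k / (1 - u k)))
      = fun u => ∏ k, h1d (u k) := by
    funext u
    by_cases hu : u ∈ Udom j
    · rw [Set.indicator_of_mem hu, hh]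
      exact Finset.prod_congr rfl fun k _ =>
        (Set.indicator_of_mem (Set.mem_Ioo.2 (mem_Udom.1 hu k)) (fun x => Real.sqrt (x / (1 - x)))).symm
    · rw [Set.indicator_of_notMem hu]
      rw [mem_Udom] at hu
      push_neg at hu
      obtain ⟨i, hi⟩ := hu
      symm
      apply Finset.prod_eq_zero (Finset.mem_univ i)
      rw [hh]
      apply Set.indicator_of_notMem
      intro hmem
      rcases Set.mem_Ioo.1 hmem with ⟨h1, h2⟩
      exact absurd (hi h1) (not_le.2 h2)
  have hG : IntegrableOn (fun u : Fin j → ℝ => ∏ k, Real.sqrt (u k / (1 - u k)))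
      (Udom j) volume := by
    rw [← integrable_indicator_iff hUmeas, hindic]
    exact hprod
  constructor
  · rw [← himg,
      integrableOn_image_iff_integrableOn_abs_det_fderiv_smul volume hUmeas hderiv Tmap_injOn]
    exact hG.congr_fun (fun u hu => (hEq u hu).symm) hUmeas
  · rw [← himg,
      integral_image_eq_integral_abs_det_fderiv_smul volume hUmeas hderiv Tmap_injOn]
    rw [setIntegral_congr_fun hUmeas hEq]
    rw [← integral_indicator hUmeas, hindic, volume_pi]
    beta_reduce
    rw [MeasureTheory.integral_fintype_prod_eq_prod (ι := Fin j) (fun _ => h1d)]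
    have hval : ∫ x, h1d x = π / 2 := by
      rw [hh, integral_indicator measurableSet_Ioo]
      exact oneDim_integral
    rw [Finset.prod_congr rfl (fun k (_ : k ∈ Finset.univ) => hval), Finset.prod_const,
      Finset.card_univ, Fintype.card_fin]
end
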